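/- Let f be monotone and α-submodular with f(∅)=0 and knapsack budget B. If for the current solution S and any element v with c(S∪{v}) ≤ B the generalized greedy picks v* maximizing (f(S∪{v})-f(S))/c(v), then f(S ∪ {v*}) - f(S) ≥ α · (c(v*)/B) · (f(OPT) - f(S)). -/

import Mathlib

/-- Per-step gain of the generalized greedy algorithm under a knapsack constraint:
if `f` is monotone, `α`-submodular (`0 < α ≤ 1`) with `f ∅ = 0`, `OPT` is feasible
(`c(OPT) ≤ B`), every element of `OPT \ S` individually fits, and `v*` maximizes the
density `(f(S ∪ {v}) - f S)/c v` among fitting elements, then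
`f (S ∪ {v*}) - f S ≥ α · (c v*/B) · (f OPT - f S)`. -/
theorem stmt_16 {V : Type*} [DecidableEq V] (f : Finset V → ℝ)
    (hmono : ∀ A B : Finset V, A ⊆ B → f A ≤ f B) (hf0 : f ∅ = 0)
    (α : ℝ) (hα : 0 < α) (hα1 : α ≤ 1)
    (hsub : ∀ (A B : Finset V) (v : V), A ⊆ B → v ∉ B →
      f (insert v A) - f A ≥ α * (f (insert v B) - f B))
    (c : V → ℝ) (hc : ∀ v, 0 < c v) (B : ℝ) (hB : 0 < B)
    (OPT : Finset V) (hOPT : ∑ v ∈ OPT, c v ≤ B)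
    (S : Finset V)
    (hfit : ∀ v ∈ OPT \ S, ∑ u ∈ insert v S, c u ≤ B)
    (vstar : V) (hvS : vstar ∉ S)
    (hmax : ∀ v, v ∉ S → ∑ u ∈ insert v S, c u ≤ B →
      (f (insert v S) - f S) / c v ≤ (f (insert vstar S) - f S) / c vstar) :
    f (insert vstar S) - f S ≥ α * (c vstar / B) * (f OPT - f S) := by
  set ρ : ℝ := (f (insert vstar S) - f S) / c vstar with hρ
  have hcv : 0 < c vstar := hc vstar
  have hρ0 : 0 ≤ ρ := div_nonneg (by
      have := hmono S (insert vstar S) (Finset.subset_insert _ _); linarith) hcv.le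
  -- key telescoping lemma
  have key : ∀ T : Finset V, Disjoint T S →
      α * (f (S ∪ T) - f S) ≤ ∑ v ∈ T, (f (insert v S) - f S) := by
    intro T
    induction T using Finset.induction_on with
    | empty => intro _; simp
    | insert _ _ ha =>
      rename_i a T ih
      intro hdisj
      have hdisjT : Disjoint T S := (Finset.disjoint_insert_left.mp hdisj).2
      have haS : a ∉ S := (Finset.disjoint_insert_left.mp hdisj).1
      have haST : a ∉ S ∪ T := by simp [haS, ha]
      have h1 := hsub S (S ∪ T) a Finset.subset_union_left haST
      have h2 := ih hdisjT
      rw [Finset.sum_insert ha]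
      have hins : S ∪ insert a T = insert a (S ∪ T) := by
        ext x; simp [or_left_comm]
      rw [hins]
      nlinarith
  have hdisj : Disjoint (OPT \ S) S := Finset.sdiff_disjoint
  have hkey := key (OPT \ S) hdisj
  -- each gain bounded by ρ * c v
  have hbound : ∑ v ∈ OPT \ S, (f (insert v S) - f S) ≤ ∑ v ∈ OPT \ S, ρ * c v := by
    apply Finset.sum_le_sum
    intro v hv
    have hvS' : v ∉ S := (Finset.mem_sdiff.mp hv).2
    have := hmax v hvS' (hfit v hv)
    rw [div_le_div_iff₀ (hc v) hcv] at this
    calc f (insert v S) - f S = ((f (insert v S) - f S) * c vstar) / c vstar := by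
          field_simp
      _ ≤ ((f (insert vstar S) - f S) * c v) / c vstar := by
          exact div_le_div_of_nonneg_right this hcv.le
      _ = ρ * c v := by rw [hρ]; ring
  have hcost : ∑ v ∈ OPT \ S, c v ≤ B := by
    refine le_trans (Finset.sum_le_sum_of_subset_of_nonneg (Finset.sdiff_subset)
      (fun v _ _ => (hc v).le)) hOPT
  have hsumc : ∑ v ∈ OPT \ S, ρ * c v = ρ * ∑ v ∈ OPT \ S, c v := by
    rw [Finset.mul_sum]
  have hmono' : f OPT ≤ f (S ∪ (OPT \ S)) := by
    apply hmono
    intro x hx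
    by_cases hxS : x ∈ S <;> simp [hxS, hx]
  have h3 : α * (f OPT - f S) ≤ ρ * B := by
    have : ρ * ∑ v ∈ OPT \ S, c v ≤ ρ * B := by
      exact mul_le_mul_of_nonneg_left hcost hρ0
    nlinarith [hkey, hbound, hsumc]
  have : f (insert vstar S) - f S = ρ * c vstar := by
    rw [hρ]; field_simp
  rw [this]
  rw [ge_iff_le, mul_comm α (c vstar / B)]
  rw [mul_assoc]
  rw [div_mul_eq_mul_div, mul_comm ρ (c vstar)]
  apply div_le_iff₀ hB |>.mpr  -- c vstar * (α*(fOPT-fS)) / B ≤ c vstar * ρ ... check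
  nlinarith [mul_le_mul_of_nonneg_left h3 hcv.le]
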